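/- L² bound for a function parametrized by two monotone changes of variables. Let 𝒳, 𝒴 : ℝ → ℝ be nondecreasing functions with 𝒳(s) + 𝒴(s) = 2s for all s ∈ ℝ (hence both are Lipschitz with constant 2). Let U₁, U₂ : ℝ → ℝ be Borel measurable with ∫_ℝ U₁² dx < ∞ and ∫_ℝ U₂² dx < ∞, and let U : ℝ → ℝ satisfy U(s) = U₁(𝒳(s)) and U(s) = U₂(𝒴(s)) for every s ∈ ℝ. Then ∫_ℝ U(s)² ds ≤ ∫_ℝ U₁(x)² dx + ∫_ℝ U₂(x)² dx. -/

import Mathlib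

open MeasureTheory Set Filter ENNReal

/-- Key bound: for a continuous Stieltjes function `f`, the `f.measure` of the preimage of
`Ioc c d` is at most `d - c`. -/
lemma stieltjes_measure_preimage_Ioc_le (f : StieltjesFunction ℝ) (hf : Continuous ⇑f)
    (c d : ℝ) : f.measure (⇑f ⁻¹' Ioc c d) ≤ ENNReal.ofReal (d - c) := by
  rcases le_or_gt d c with hdc | hcd
  · rw [Ioc_eq_empty (not_lt.2 hdc), preimage_empty, measure_empty]
    exact zero_le
  set A : Set ℝ := ⇑f ⁻¹' Ioc c d with hAdef
  have hA : A = ⋃ n : ℕ, A ∩ Icc (-(n : ℝ)) n := by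
    ext x
    simp only [mem_iUnion, mem_inter_iff, mem_Icc]
    constructor
    · intro hx
      obtain ⟨n, hn⟩ := exists_nat_ge |x|
      exact ⟨n, hx, neg_le_of_abs_le hn, le_of_abs_le hn⟩
    · rintro ⟨n, hn, -⟩
      exact hn
  have hmono : Monotone (fun n : ℕ => A ∩ Icc (-(n : ℝ)) n) := by
    intro m n hmn
    exact inter_subset_inter_right _ (Icc_subset_Icc (by exact_mod_cast neg_le_neg (by exact_mod_cast hmn)) (by exact_mod_cast hmn))
  rw [hA, Directed.measure_iUnion hmono.directed_le]
  refine iSup_le fun n => ?_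
  set T : Set ℝ := A ∩ Icc (-(n : ℝ)) n with hTdef
  rcases T.eq_empty_or_nonempty with hTe | hTne
  · rw [hTe, measure_empty]; exact zero_le
  have hbb : BddBelow T := ⟨-(n : ℝ), fun x hx => hx.2.1⟩
  have hba : BddAbove T := ⟨(n : ℝ), fun x hx => hx.2.2⟩
  set a := sInf T
  set b := sSup T
  have hmaps : MapsTo (⇑f) A (Ioc c d) := fun x hx => hx
  have hsubA : T ⊆ A := inter_subset_left
  have hacl : a ∈ closure A := closure_mono hsubA (csInf_mem_closure hTne hbb)
  have hbcl : b ∈ closure A := closure_mono hsubA (csSup_mem_closure hTne hba)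
  have hfa : f a ∈ Icc c d := by
    have := map_mem_closure hf hacl hmaps
    rwa [closure_Ioc hcd.ne] at this
  have hfb : f b ∈ Icc c d := by
    have := map_mem_closure hf hbcl hmaps
    rwa [closure_Ioc hcd.ne] at this
  have hTsub : T ⊆ Icc a b := fun x hx => ⟨csInf_le hbb hx, le_csSup hba hx⟩
  have hleft : Function.leftLim (⇑f) a = f a :=
    leftLim_eq_of_tendsto
      ((hf.tendsto a).mono_left nhdsWithin_le_nhds)
  calc f.measure T ≤ f.measure (Icc a b) := measure_mono hTsub
    _ = ENNReal.ofReal (f b - Function.leftLim (⇑f) a) := f.measure_Icc a b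
    _ = ENNReal.ofReal (f b - f a) := by rw [hleft]
    _ ≤ ENNReal.ofReal (d - c) :=
        ENNReal.ofReal_le_ofReal (sub_le_sub hfb.2 hfa.1)

/-- For a continuous Stieltjes function `f`, `f.measure (f ⁻¹' E) ≤ volume E` for every set. -/
lemma stieltjes_measure_preimage_le_volume (f : StieltjesFunction ℝ) (hf : Continuous ⇑f)
    (E : Set ℝ) : f.measure (⇑f ⁻¹' E) ≤ volume E := by
  rw [Real.volume_eq_stieltjes_id]
  have hid : StieltjesFunction.id.measure E = StieltjesFunction.id.outer E := by
    rw [StieltjesFunction.measure_def]; rfl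
  rw [hid, StieltjesFunction.outer, OuterMeasure.ofFunction_apply]
  refine le_iInf fun t => le_iInf fun ht => ?_
  calc f.measure (⇑f ⁻¹' E) ≤ f.measure (⋃ i, ⇑f ⁻¹' t i) := by
        refine measure_mono ?_
        rw [← preimage_iUnion]
        exact preimage_mono ht
    _ ≤ ∑' i, f.measure (⇑f ⁻¹' t i) := measure_iUnion_le _
    _ ≤ ∑' i, StieltjesFunction.id.length (t i) := by
        refine ENNReal.tsum_le_tsum fun i => ?_
        rw [StieltjesFunction.length_eq]
        refine le_iInf fun a => le_iInf fun b => le_iInf fun hsub => ?_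
        calc f.measure (⇑f ⁻¹' t i) ≤ f.measure (⇑f ⁻¹' Ioc a b) :=
              measure_mono (preimage_mono (fun x hx => hsub ⟨hx, not_isBot x⟩))
          _ ≤ ENNReal.ofReal (b - a) := stieltjes_measure_preimage_Ioc_le f hf a b
          _ = ENNReal.ofReal (StieltjesFunction.id b - StieltjesFunction.id a) := rfl

/-- L² bound for a function parametrized by two monotone changes of
variables: if `𝒳, 𝒴` are nondecreasing with `𝒳 s + 𝒴 s = 2s`, `U₁, U₂` are Borel
measurable with square-integrable, and `U s = U₁ (𝒳 s) = U₂ (𝒴 s)`, then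
`∫ U² ≤ ∫ U₁² + ∫ U₂²`. -/
theorem L2_bound_parametrized
    (𝒳 𝒴 : ℝ → ℝ) (hX : Monotone 𝒳) (hY : Monotone 𝒴)
    (hXY : ∀ s : ℝ, 𝒳 s + 𝒴 s = 2 * s)
    (U₁ U₂ U : ℝ → ℝ) (hU₁m : Measurable U₁) (hU₂m : Measurable U₂)
    (hU₁i : Integrable (fun x => U₁ x ^ 2))
    (hU₂i : Integrable (fun x => U₂ x ^ 2))
    (hU : ∀ s : ℝ, U s = U₁ (𝒳 s) ∧ U s = U₂ (𝒴 s)) :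
    ∫ s, U s ^ 2 ≤ (∫ x, U₁ x ^ 2) + ∫ x, U₂ x ^ 2 := by
  -- continuity of 𝒳 and 𝒴
  have hlip : ∀ f g : ℝ → ℝ, Monotone f → Monotone g → (∀ s, f s + g s = 2 * s) →
      Continuous f := by
    intro f g hfm hgm hfg
    have key : ∀ s t : ℝ, s ≤ t → f t - f s ≤ 2 * (t - s) := by
      intro s t hst
      have h1 := hfg s
      have h2 := hfg t
      have := hgm hst
      nlinarith
    refine LipschitzWith.continuous (K := 2) (LipschitzWith.of_dist_le_mul fun x y => ?_)
    rcases le_total x y with h | h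
    · rw [Real.dist_eq, Real.dist_eq, abs_of_nonpos (by linarith [hfm h]),
        abs_of_nonpos (by linarith)]
      have := key x y h
      push_cast
      linarith
    · rw [Real.dist_eq, Real.dist_eq, abs_of_nonneg (by linarith [hfm h]),
        abs_of_nonneg (by linarith)]
      have := key y x h
      push_cast
      linarith
  have hXc : Continuous 𝒳 := hlip 𝒳 𝒴 hX hY hXY
  have hYc : Continuous 𝒴 := hlip 𝒴 𝒳 hY hX fun s => by rw [add_comm]; exact hXY s
  -- Stieltjes functions
  set SX : StieltjesFunction ℝ := ⟨𝒳, hX, fun x => (hXc.continuousAt).continuousWithinAt⟩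
  set SY : StieltjesFunction ℝ := ⟨𝒴, hY, fun x => (hYc.continuousAt).continuousWithinAt⟩
  have hSX : ⇑SX = 𝒳 := rfl
  have hSY : ⇑SY = 𝒴 := rfl
  -- sum of Stieltjes measures is 2 • volume
  have hsum : SX.measure + SY.measure = (2 : ℝ≥0∞) • volume := by
    haveI : IsLocallyFiniteMeasure (SX.measure + SY.measure) :=
      ⟨fun x => ⟨Ioc (x - 1) (x + 1), Ioc_mem_nhds (by linarith) (by linarith), by
        rw [Measure.add_apply, SX.measure_Ioc, SY.measure_Ioc]
        exact ENNReal.add_lt_top.2 ⟨ENNReal.ofReal_lt_top, ENNReal.ofReal_lt_top⟩⟩⟩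
    refine Measure.ext_of_Ioc _ _ fun a b hab => ?_
    rw [Measure.add_apply, SX.measure_Ioc, SY.measure_Ioc, Measure.smul_apply,
      Real.volume_Ioc, smul_eq_mul, hSX, hSY]
    rw [← ENNReal.ofReal_add (by linarith [hX hab.le]) (by linarith [hY hab.le]),
      ← ENNReal.ofReal_ofNat 2, ← ENNReal.ofReal_mul (by norm_num)]
    congr 1
    have h1 := hXY a
    have h2 := hXY b
    ring_nf
    ring_nf at h1 h2
    linarith
  -- measurability
  have hXm : Measurable 𝒳 := hX.measurable
  have hYm : Measurable 𝒴 := hY.measurable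
  have hU1 : U = fun s => U₁ (𝒳 s) := funext fun s => (hU s).1
  have hU2 : U = fun s => U₂ (𝒴 s) := funext fun s => (hU s).2
  have hUm : Measurable U := by rw [hU1]; exact hU₁m.comp hXm
  -- lintegral quantities
  set lX : ℝ≥0∞ := ∫⁻ x, ENNReal.ofReal (U₁ x ^ 2) with hlXdef
  set lY : ℝ≥0∞ := ∫⁻ x, ENNReal.ofReal (U₂ x ^ 2) with hlYdef
  have hlX : lX ≠ ⊤ := by
    rw [hlXdef]
    exact (lintegral_ofReal_ne_top_iff_integrable
      ((hU₁m.pow_const 2).aestronglyMeasurable)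
      (Eventually.of_forall fun x => sq_nonneg _)).2 hU₁i
  have hlY : lY ≠ ⊤ := by
    rw [hlYdef]
    exact (lintegral_ofReal_ne_top_iff_integrable
      ((hU₂m.pow_const 2).aestronglyMeasurable)
      (Eventually.of_forall fun x => sq_nonneg _)).2 hU₂i
  -- pushforward bounds
  have hmapX : Measure.map 𝒳 SX.measure ≤ volume := by
    refine Measure.le_iff.2 fun s hs => ?_
    rw [Measure.map_apply hXm hs]
    exact stieltjes_measure_preimage_le_volume SX hXc s
  have hmapY : Measure.map 𝒴 SY.measure ≤ volume := by
    refine Measure.le_iff.2 fun s hs => ?_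
    rw [Measure.map_apply hYm hs]
    exact stieltjes_measure_preimage_le_volume SY hYc s
  have hpartX : ∫⁻ s, ENNReal.ofReal (U s ^ 2) ∂SX.measure ≤ lX := by
    calc ∫⁻ s, ENNReal.ofReal (U s ^ 2) ∂SX.measure
        = ∫⁻ s, ENNReal.ofReal (U₁ (𝒳 s) ^ 2) ∂SX.measure := by rw [hU1]
      _ = ∫⁻ x, ENNReal.ofReal (U₁ x ^ 2) ∂(Measure.map 𝒳 SX.measure) :=
          (lintegral_map ((hU₁m.pow_const 2).ennreal_ofReal) hXm).symm
      _ ≤ lX := lintegral_mono' hmapX le_rfl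
  have hpartY : ∫⁻ s, ENNReal.ofReal (U s ^ 2) ∂SY.measure ≤ lY := by
    calc ∫⁻ s, ENNReal.ofReal (U s ^ 2) ∂SY.measure
        = ∫⁻ s, ENNReal.ofReal (U₂ (𝒴 s) ^ 2) ∂SY.measure := by rw [hU2]
      _ = ∫⁻ x, ENNReal.ofReal (U₂ x ^ 2) ∂(Measure.map 𝒴 SY.measure) :=
          (lintegral_map ((hU₂m.pow_const 2).ennreal_ofReal) hYm).symm
      _ ≤ lY := lintegral_mono' hmapY le_rfl
  -- main bound for lintegrals
  have hmain : ∫⁻ s, ENNReal.ofReal (U s ^ 2) ≤ lX + lY := by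
    have h2 : (2 : ℝ≥0∞) * ∫⁻ s, ENNReal.ofReal (U s ^ 2)
        = (∫⁻ s, ENNReal.ofReal (U s ^ 2) ∂SX.measure)
          + ∫⁻ s, ENNReal.ofReal (U s ^ 2) ∂SY.measure := by
      rw [← lintegral_add_measure, hsum, lintegral_smul_measure, smul_eq_mul]
    calc ∫⁻ s, ENNReal.ofReal (U s ^ 2)
        ≤ (2 : ℝ≥0∞) * ∫⁻ s, ENNReal.ofReal (U s ^ 2) :=
          le_mul_of_one_le_left zero_le one_le_two
      _ = _ := h2
      _ ≤ lX + lY := add_le_add hpartX hpartY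
  -- convert to Bochner integrals
  rw [integral_eq_lintegral_of_nonneg_ae (Eventually.of_forall fun s => sq_nonneg (U s))
      ((hUm.pow_const 2).aestronglyMeasurable),
    integral_eq_lintegral_of_nonneg_ae (Eventually.of_forall fun x => sq_nonneg (U₁ x))
      ((hU₁m.pow_const 2).aestronglyMeasurable),
    integral_eq_lintegral_of_nonneg_ae (Eventually.of_forall fun x => sq_nonneg (U₂ x))
      ((hU₂m.pow_const 2).aestronglyMeasurable)]
  rw [← ENNReal.toReal_add hlX hlY]
  exact ENNReal.toReal_mono (ENNReal.add_ne_top.2 ⟨hlX, hlY⟩) hmain
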